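/- Let P and P̄ be two distributions of (X,Y) on 𝒳×{0,1} having the same marginal μ_X, both satisfying the margin condition with exponent α>0 and constant C_M>0, with regression functions η and η̄ respectively. Then the corresponding decision rules f_η(x)=1{η(x)≥1/2} and f_{η̄}(x)=1{η̄(x)≥1/2} satisfy ‖f_{η̄} − f_η‖_{L¹(μ_X)} ≤ 2C_M · ‖η̄ − η‖_{L^∞(μ_X)}^α. -/

import Mathlib

open MeasureTheory Set
open scoped ENNReal

noncomputable section

/-- The margin condition with exponent `α` and constant `C`:
`μ_X(0 < |η(X) - 1/2| ≤ t) ≤ C t^α` for all `0 ≤ t < 1`. -/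
def MarginCond {𝒳 : Type*} [MeasurableSpace 𝒳] (μ : Measure 𝒳) (η : 𝒳 → ℝ) (α C : ℝ) : Prop :=
  ∀ t : ℝ, 0 ≤ t → t < 1 →
    (μ {x | 0 < |η x - 1/2| ∧ |η x - 1/2| ≤ t}).toReal ≤ C * t ^ α

/-- The plug-in (Bayes) rule `x ↦ 1{η(x) ≥ 1/2}` associated with a function `η`. -/
def bayes {𝒳 : Type*} (η : 𝒳 → ℝ) : 𝒳 → Bool := fun x => decide ((1:ℝ)/2 ≤ η x)

/-- `η` is the regression function of the joint distribution `P` of `(X,Y)` on `𝒳 × {0,1}`: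
`η` is Borel with values in `[0,1]` and `P(A × {1}) = ∫_A η dμ_X` for every measurable `A`,
where `μ_X = P ∘ (proj₁)⁻¹` is the marginal of `X`. -/
def IsRegFun {𝒳 : Type*} [MeasurableSpace 𝒳] (P : Measure (𝒳 × Bool)) (η : 𝒳 → ℝ) : Prop :=
  Measurable η ∧ (∀ x, η x ∈ Icc (0:ℝ) 1) ∧
    ∀ A : Set 𝒳, MeasurableSet A →
      P (A ×ˢ ({true} : Set Bool)) = ∫⁻ x in A, ENNReal.ofReal (η x) ∂(P.map Prod.fst)

/-- Classification error `R(f) = P(Y ≠ f(X))` of a prediction rule `f`. -/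
def risk {𝒳 : Type*} [MeasurableSpace 𝒳] (P : Measure (𝒳 × Bool)) (f : 𝒳 → Bool) : ℝ :=
  (P {p : 𝒳 × Bool | p.2 ≠ f p.1}).toReal

/-- Real-valued indicator of a prediction rule. -/
def bInd {𝒳 : Type*} (f : 𝒳 → Bool) (x : 𝒳) : ℝ := if f x then 1 else 0

/-- `L¹(μ)`-distance `‖f - g‖_{L¹(μ)}` between two prediction rules. -/
def distL1 {𝒳 : Type*} [MeasurableSpace 𝒳] (μ : Measure 𝒳) (f g : 𝒳 → Bool) : ℝ :=
  ∫ x, |bInd f x - bInd g x| ∂μ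

/-- If two distributions of `(X,Y)` have the same marginal `μ_X` and both satisfy the margin
condition with exponent `α` and constant `C_M`, then their decision rules satisfy
`‖f_{η̄} - f_η‖_{L¹(μ_X)} ≤ 2 C_M ‖η̄ - η‖_{L^∞(μ_X)}^α`. -/
theorem statement7 {𝒳 : Type*} [MeasurableSpace 𝒳]
    (μ : Measure 𝒳) [IsProbabilityMeasure μ]
    (η η' : 𝒳 → ℝ) (hη : Measurable η) (hη01 : ∀ x, η x ∈ Icc (0:ℝ) 1)
    (hη' : Measurable η') (hη'01 : ∀ x, η' x ∈ Icc (0:ℝ) 1)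
    (α C : ℝ) (hα : 0 < α) (hC : 0 < C)
    (hmargin : MarginCond μ η α C) (hmargin' : MarginCond μ η' α C) :
    distL1 μ (bayes η') (bayes η)
      ≤ 2 * C * ((eLpNorm (fun x => η' x - η x) ⊤ μ).toReal) ^ α := by
  classical
  set ε := (eLpNorm (fun x => η' x - η x) ⊤ μ).toReal with hεdef
  have hε0 : 0 ≤ ε := ENNReal.toReal_nonneg
  set t : ℝ := min ε (1/2) with htdef
  have ht0 : 0 ≤ t := le_min hε0 (by norm_num)
  have ht1 : t < 1 := lt_of_le_of_lt (min_le_right _ _) (by norm_num)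
  -- the L∞ norm is finite
  have hbd : ∀ᵐ x ∂μ, ‖η' x - η x‖ ≤ 1 := by
    filter_upwards with x
    have h1 := hη01 x; have h2 := hη'01 x
    rw [Real.norm_eq_abs, abs_le]
    constructor <;> [linarith [h1.2, h2.1]; linarith [h1.1, h2.2]]
  have htop : eLpNorm (fun x => η' x - η x) ⊤ μ ≠ ⊤ := by
    rw [eLpNorm_exponent_top]
    exact ne_of_lt (lt_of_le_of_lt (eLpNormEssSup_le_of_ae_bound (C := 1) hbd)
      ENNReal.ofReal_lt_top)
  have hae : ∀ᵐ x ∂μ, |η' x - η x| ≤ ε := by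
    have h := ae_le_eLpNormEssSup (f := fun x => η' x - η x) (μ := μ)
    filter_upwards [h] with x hx
    have : (‖η' x - η x‖₊ : ℝ≥0∞).toReal ≤ ε := by
      rw [hεdef, eLpNorm_exponent_top]
      exact ENNReal.toReal_mono (by rwa [eLpNorm_exponent_top] at htop) hx
    simpa [Real.norm_eq_abs] using this
  -- sets
  set S : Set 𝒳 := {x | 0 < |η x - 1/2| ∧ |η x - 1/2| ≤ t} with hSdef
  set S' : Set 𝒳 := {x | 0 < |η' x - 1/2| ∧ |η' x - 1/2| ≤ t} with hS'def
  set D : Set 𝒳 := {x | bayes η' x ≠ bayes η x} with hDdef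
  have hA : MeasurableSet {x | (1:ℝ)/2 ≤ η x} := measurableSet_le measurable_const hη
  have hA' : MeasurableSet {x | (1:ℝ)/2 ≤ η' x} := measurableSet_le measurable_const hη'
  have hDeq : D = ({x | (1:ℝ)/2 ≤ η' x} \ {x | (1:ℝ)/2 ≤ η x}) ∪
      ({x | (1:ℝ)/2 ≤ η x} \ {x | (1:ℝ)/2 ≤ η' x}) := by
    ext x
    simp only [hDdef, bayes, mem_setOf_eq, mem_union, mem_diff, mem_setOf_eq, ne_eq,
      decide_eq_decide]
    tauto
  have hD : MeasurableSet D := by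
    rw [hDeq]; exact (hA'.diff hA).union (hA.diff hA')
  -- L1 distance equals measure of D
  have hdist : distL1 μ (bayes η') (bayes η) = (μ D).toReal := by
    have : (fun x => |bInd (bayes η') x - bInd (bayes η) x|) = D.indicator (fun _ => (1:ℝ)) := by
      funext x
      by_cases hx : bayes η' x = bayes η x
      · have : x ∉ D := by simp [hDdef, hx]
        simp [bInd, hx, Set.indicator_of_notMem this]
      · have : x ∈ D := hx
        rw [Set.indicator_of_mem this]
        rcases Bool.eq_false_or_eq_true (bayes η' x) with h1 | h1 <;>
          rcases Bool.eq_false_or_eq_true (bayes η x) with h2 | h2 <;>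
          simp [bInd, h1, h2] at hx ⊢
    rw [distL1, this]
    simp [integral_indicator hD, measureReal_def]
  -- ae inclusion
  have hincl : ∀ᵐ x ∂μ, x ∈ D → x ∈ S ∪ S' := by
    filter_upwards [hae] with x hx hxD
    have hd : ¬ ((1:ℝ)/2 ≤ η' x ↔ (1:ℝ)/2 ≤ η x) := by
      simpa [hDdef, bayes, decide_eq_decide] using hxD
    by_cases h2 : (1:ℝ)/2 ≤ η x
    · have h1 : ¬ (1:ℝ)/2 ≤ η' x := fun h => hd ⟨fun _ => h2, fun _ => h⟩
      push_neg at h1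
      right
      refine ⟨?_, ?_⟩
      · rw [abs_pos]; intro h; linarith
      · have : |η' x - 1/2| = 1/2 - η' x := by rw [abs_of_nonpos]; ring; linarith
        rw [this]
        refine le_min ?_ ?_
        · calc 1/2 - η' x ≤ η x - η' x := by linarith
            _ ≤ |η' x - η x| := by rw [abs_sub_comm]; exact le_abs_self _
            _ ≤ ε := hx
        · linarith [(hη'01 x).1]
    · have h1 : (1:ℝ)/2 ≤ η' x := by
        by_contra h1
        exact hd ⟨fun h => absurd h h1, fun h => absurd h h2⟩
      push_neg at h2
      left
      refine ⟨?_, ?_⟩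
      · rw [abs_pos]; intro h; linarith
      · have : |η x - 1/2| = 1/2 - η x := by rw [abs_of_nonpos]; ring; linarith
        rw [this]
        refine le_min ?_ ?_
        · calc 1/2 - η x ≤ η' x - η x := by linarith
            _ ≤ |η' x - η x| := le_abs_self _
            _ ≤ ε := hx
        · linarith [(hη01 x).1]
  have hμD : μ D ≤ μ S + μ S' :=
    le_trans (measure_mono_ae hincl) (measure_union_le S S')
  have hfin : μ S ≠ ⊤ := measure_ne_top μ S
  have hfin' : μ S' ≠ ⊤ := measure_ne_top μ S'
  have hμDr : (μ D).toReal ≤ (μ S).toReal + (μ S').toReal := by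
    rw [← ENNReal.toReal_add hfin hfin']
    exact ENNReal.toReal_mono (by simp [ENNReal.add_ne_top, hfin, hfin']) hμD
  have hS_bd : (μ S).toReal ≤ C * t ^ α := hmargin t ht0 ht1
  have hS'_bd : (μ S').toReal ≤ C * t ^ α := hmargin' t ht0 ht1
  have htε : t ^ α ≤ ε ^ α :=
    Real.rpow_le_rpow ht0 (min_le_left _ _) (le_of_lt hα)
  calc distL1 μ (bayes η') (bayes η) = (μ D).toReal := hdist
    _ ≤ (μ S).toReal + (μ S').toReal := hμDr
    _ ≤ C * t ^ α + C * t ^ α := add_le_add hS_bd hS'_bd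
    _ = 2 * C * t ^ α := by ring
    _ ≤ 2 * C * ε ^ α := by
        have : 0 ≤ 2 * C := by linarith
        exact mul_le_mul_of_nonneg_left htε this


end
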